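/- (Elimination theory) Let X ⊆ ℂ^m be a closed algebraic subset, i.e. the common zero set of an arbitrary family of polynomials in m variables over ℂ, and let f : ℂ^m → ℂ be (the evaluation of) a polynomial. Then either the image f(X) ⊆ ℂ is a finite set, or its complement ℂ ∖ f(X) is a finite set. -/

import Mathlib

open Polynomial

set_option maxHeartbeats 1000000
set_option synthInstance.maxHeartbeats 400000

/-- Easy case: if `a` satisfies a nonzero polynomial over `ℂ`, then the set of `c` for which
`a - c` is contained in a maximal ideal is finite. -/
lemma ElimAux.finite_spectrum {A : Type} [CommRing A] [Algebra ℂ A] (a : A)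
    (p : ℂ[X]) (hp : p ≠ 0) (hpa : Polynomial.aeval a p = 0) :
    {c : ℂ | Ideal.span {a - algebraMap ℂ A c} ≠ ⊤}.Finite := by
  apply (Polynomial.finite_setOf_isRoot hp).subset
  intro c hc
  obtain ⟨M, hM, hle⟩ := Ideal.exists_le_maximal _ hc
  haveI := hM
  letI : Field (A ⧸ M) := Ideal.Quotient.field M
  have hmem : a - algebraMap ℂ A c ∈ M := hle (Ideal.subset_span (Set.mem_singleton _))
  set π := Ideal.Quotient.mkₐ ℂ M with hπ
  have h0 : π (a - algebraMap ℂ A c) = 0 := (Ideal.Quotient.eq_zero_iff_mem).mpr hmem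
  have ha : π a = algebraMap ℂ (A ⧸ M) c := by
    have := sub_eq_zero.mp (by rwa [map_sub, π.commutes] at h0)
    simpa using this
  have : algebraMap ℂ (A ⧸ M) (p.eval c) = 0 := by
    have h1 : π (Polynomial.aeval a p) = 0 := by rw [hpa, map_zero]
    rw [← Polynomial.aeval_algHom_apply, ha] at h1
    rwa [Polynomial.aeval_def, Polynomial.eval₂_at_apply] at h1
  have hinj : Function.Injective (algebraMap ℂ (A ⧸ M)) := RingHom.injective _
  show p.IsRoot c
  have := hinj (by rw [this, map_zero] : algebraMap ℂ (A ⧸ M) (p.eval c) = algebraMap ℂ (A ⧸ M) 0)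
  exact this

/-- Inner step: if all the denominators of the minimal polynomials of the generators'
images are nonvanishing at `c`, then `a - c` generates a proper ideal. -/
lemma ElimAux.inner {A L : Type} [CommRing A] [Algebra ℂ A] [Field L]
    [Algebra (FractionRing ℂ[X]) L]
    (ψ : A →+* L) (s : Finset A) (hs : Algebra.adjoin ℂ (↑s : Set A) = ⊤)
    (hints : ∀ b : A, IsIntegral (FractionRing ℂ[X]) (ψ b))
    (a : A) (c : ℂ)
    (hψa : ψ (a - algebraMap ℂ A c) =
      algebraMap (FractionRing ℂ[X]) L (algebraMap ℂ[X] (FractionRing ℂ[X]) (X - C c)))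
    (hψz : ∀ z : ℂ, ψ (algebraMap ℂ A z) =
      algebraMap (FractionRing ℂ[X]) L (algebraMap ℂ[X] (FractionRing ℂ[X]) (C z)))
    (hden : ∀ b ∈ s, ∀ j ∈ Finset.range ((minpoly (FractionRing ℂ[X]) (ψ b)).natDegree + 1),
      Polynomial.eval c ((IsLocalization.sec (nonZeroDivisors ℂ[X])
        ((minpoly (FractionRing ℂ[X]) (ψ b)).coeff j)).2 : ℂ[X]) ≠ 0) :
    Ideal.span {a - algebraMap ℂ A c} ≠ ⊤ := by
  classical
  intro hc
  set K := FractionRing ℂ[X]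
  have hKinj : Function.Injective (algebraMap ℂ[X] K) := IsFractionRing.injective _ _
  -- the local ring at X - c
  set Pc : Ideal ℂ[X] := Ideal.span {X - C c} with hPc
  haveI hPcmax : Pc.IsMaximal := by
    rw [hPc, ← Polynomial.ker_evalRingHom]
    exact RingHom.ker_isMaximal_of_surjective _ (fun z => ⟨C z, by simp⟩)
  haveI : Pc.IsPrime := hPcmax.isPrime
  set Rc := Localization.AtPrime Pc with hRc
  have hu_c : ∀ y : Pc.primeCompl, IsUnit (algebraMap ℂ[X] K y) := by
    intro y
    have hy' : (y : ℂ[X]) ∉ Pc := y.2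
    have hy0 : (y : ℂ[X]) ≠ 0 := fun h => hy' (h ▸ Pc.zero_mem)
    exact isUnit_iff_ne_zero.mpr (fun h => hy0 (hKinj (by rw [h, map_zero])))
  set ρ : Rc →+* K := IsLocalization.lift (S := Rc) hu_c with hρ
  have hρeq : ∀ q : ℂ[X], ρ (algebraMap ℂ[X] Rc q) = algebraMap ℂ[X] K q := fun q =>
    IsLocalization.lift_eq hu_c q
  letI : Algebra Rc L := ((algebraMap K L).comp ρ).toAlgebra
  have halgRcL : ∀ r : Rc, algebraMap Rc L r = algebraMap K L (ρ r) := fun _ => rfl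
  -- each generator image is integral over Rc
  have hint : ∀ b ∈ s, IsIntegral Rc (ψ b) := by
    intro b hb
    have hμmonic : (minpoly K (ψ b)).Monic := minpoly.monic (hints b)
    have hlift : minpoly K (ψ b) ∈ Polynomial.lifts ρ := by
      rw [Polynomial.lifts_iff_coeff_lifts]
      intro j
      rcases le_or_gt j (minpoly K (ψ b)).natDegree with hj | hj
      · set nd := IsLocalization.sec (nonZeroDivisors ℂ[X]) ((minpoly K (ψ b)).coeff j) with hnd
        have hsec : (minpoly K (ψ b)).coeff j * algebraMap ℂ[X] K (nd.2 : ℂ[X]) =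
            algebraMap ℂ[X] K nd.1 := by
          have := IsLocalization.sec_spec (M := nonZeroDivisors ℂ[X]) (S := K)
            ((minpoly K (ψ b)).coeff j)
          rw [← hnd] at this
          exact this
        have hdc : Polynomial.eval c ((nd.2 : ℂ[X])) ≠ 0 :=
          hden b hb j (Finset.mem_range.mpr (Nat.lt_succ_of_le hj))
        have hdP : (nd.2 : ℂ[X]) ∈ Pc.primeCompl := by
          intro hmem
          apply hdc
          have hle : Pc ≤ RingHom.ker (Polynomial.evalRingHom c) := by
            rw [Polynomial.ker_evalRingHom, hPc]
          have h0 := hle hmem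
          rw [RingHom.mem_ker] at h0
          simpa using h0
        obtain ⟨v, hv⟩ := (IsLocalization.map_units Rc
          (⟨_, hdP⟩ : Pc.primeCompl)).exists_right_inv
        refine ⟨algebraMap ℂ[X] Rc nd.1 * v, ?_⟩
        have h2 : algebraMap ℂ[X] K (nd.2 : ℂ[X]) * ρ v = 1 := by
          rw [← hρeq, ← map_mul, hv, map_one]
        calc ρ (algebraMap ℂ[X] Rc nd.1 * v) = algebraMap ℂ[X] K nd.1 * ρ v := by
              rw [map_mul, hρeq]
          _ = ((minpoly K (ψ b)).coeff j * algebraMap ℂ[X] K (nd.2 : ℂ[X])) * ρ v := by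
              rw [hsec]
          _ = (minpoly K (ψ b)).coeff j * (algebraMap ℂ[X] K (nd.2 : ℂ[X]) * ρ v) := by ring
          _ = (minpoly K (ψ b)).coeff j := by rw [h2, mul_one]
      · exact ⟨0, by rw [map_zero, Polynomial.coeff_eq_zero_of_natDegree_lt hj]⟩
    obtain ⟨Q, hQmap, -, hQmonic⟩ := Polynomial.lifts_and_degree_eq_and_monic hlift hμmonic
    refine ⟨Q, hQmonic, ?_⟩
    have hrw : (algebraMap Rc L) = (algebraMap K L).comp ρ := rfl
    rw [hrw, ← Polynomial.eval₂_map, hQmap, ← Polynomial.aeval_def]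
    exact minpoly.aeval K (ψ b)
  -- all images of elements of A are integral over Rc
  have hψint : ∀ v : A, IsIntegral Rc (ψ v) := by
    intro v
    have hv : v ∈ Algebra.adjoin ℂ (↑s : Set A) := hs ▸ Algebra.mem_top
    induction hv using Algebra.adjoin_induction with
    | mem x hx => exact hint x hx
    | algebraMap z =>
        have h2 : ψ (algebraMap ℂ A z) = algebraMap Rc L (algebraMap ℂ[X] Rc (C z)) := by
          rw [hψz, halgRcL, hρeq]
        rw [h2]; exact isIntegral_algebraMap
    | add x y hx hy ihx ihy => rw [map_add]; exact ihx.add ihy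
    | mul x y hx hy ihx ihy => rw [map_mul]; exact ihx.mul ihy
  -- injectivity
  have hρ0 : ∀ r : Rc, ρ r = 0 → r = 0 := by
    intro r hr
    obtain ⟨⟨n, t⟩, hnt⟩ := IsLocalization.surj Pc.primeCompl r
    have hnt' : r * algebraMap ℂ[X] Rc (t : ℂ[X]) = algebraMap ℂ[X] Rc n := hnt
    have hn : algebraMap ℂ[X] K n = 0 := by
      have := congrArg ρ hnt'
      rw [map_mul, hr, zero_mul, hρeq] at this
      exact this.symm
    have hn0 : n = 0 := hKinj (by rw [hn, map_zero])
    have ht : IsUnit (algebraMap ℂ[X] Rc (t : ℂ[X])) := IsLocalization.map_units Rc t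
    have h00 : r * algebraMap ℂ[X] Rc (t : ℂ[X]) = 0 := by rw [hnt', hn0, map_zero]
    exact (ht.mul_left_eq_zero).mp h00
  have hρinj : Function.Injective ρ := (injective_iff_map_eq_zero ρ).mpr hρ0
  have hLinj : Function.Injective (algebraMap Rc L) :=
    (RingHom.injective (algebraMap K L)).comp hρinj
  haveI : IsLocalRing Rc := IsLocalization.AtPrime.isLocalRing Rc Pc
  set y := algebraMap ℂ[X] Rc (X - C c) with hy
  have hyP : (X - C c) ∈ Pc := Ideal.subset_span (Set.mem_singleton _)
  have hymax : y ∈ IsLocalRing.maximalIdeal Rc :=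
    (IsLocalization.AtPrime.to_map_mem_maximal_iff Rc Pc _).mpr hyP
  obtain ⟨r, hr⟩ := Ideal.mem_span_singleton'.mp
    (hc ▸ Submodule.mem_top : (1 : A) ∈ Ideal.span {a - algebraMap ℂ A c})
  have hψeq : ψ (a - algebraMap ℂ A c) = algebraMap Rc L y := by
    rw [hψa, hy, halgRcL, hρeq]
  set w := algebraMap Rc L y with hw0
  have hone : ψ r * w = 1 := by
    rw [← hψeq, ← map_mul, hr, map_one]
  obtain ⟨p, hpmonic, hp⟩ := hψint r
  set n := p.natDegree with hn
  have hw : ∀ i ∈ Finset.range (n + 1), ψ r ^ i * w ^ n = w ^ (n - i) := by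
    intro i hi
    have hi' : i ≤ n := Nat.lt_succ_iff.mp (Finset.mem_range.mp hi)
    calc ψ r ^ i * w ^ n = ψ r ^ i * (w ^ i * w ^ (n - i)) := by
          rw [← pow_add, Nat.add_sub_cancel' hi']
      _ = (ψ r * w) ^ i * w ^ (n - i) := by rw [mul_pow]; ring
      _ = w ^ (n - i) := by rw [hone, one_pow, one_mul]
  have hsum : ∑ i ∈ Finset.range (n + 1), algebraMap Rc L (p.coeff i) * w ^ (n - i) = 0 := by
    calc ∑ i ∈ Finset.range (n + 1), algebraMap Rc L (p.coeff i) * w ^ (n - i)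
        = ∑ i ∈ Finset.range (n + 1), algebraMap Rc L (p.coeff i) * (ψ r ^ i * w ^ n) := by
          refine Finset.sum_congr rfl fun i hi => by rw [hw i hi]
      _ = (∑ i ∈ Finset.range (n + 1), algebraMap Rc L (p.coeff i) * ψ r ^ i) * w ^ n := by
          rw [Finset.sum_mul]
          exact Finset.sum_congr rfl fun i _ => by ring
      _ = Polynomial.eval₂ (algebraMap Rc L) (ψ r) p * w ^ n := by
          rw [Polynomial.eval₂_eq_sum_range]
      _ = 0 := by rw [hp, zero_mul]
  have hS : (∑ i ∈ Finset.range (n + 1), p.coeff i * y ^ (n - i)) = 0 := by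
    apply hLinj
    rw [map_zero, map_sum, ← hsum]
    exact Finset.sum_congr rfl fun i _ => by rw [map_mul, map_pow]
  rw [Finset.sum_range_succ] at hS
  have hlast : p.coeff n * y ^ (n - n) = 1 := by
    rw [Nat.sub_self, pow_zero, mul_one]
    exact hpmonic
  rw [hlast] at hS
  have hmem : ∑ i ∈ Finset.range n, p.coeff i * y ^ (n - i) ∈ IsLocalRing.maximalIdeal Rc := by
    apply Ideal.sum_mem
    intro i hi
    have hin : i < n := Finset.mem_range.mp hi
    have hyy : y ^ (n - i) = y ^ (n - i - 1) * y := by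
      rw [← pow_succ]
      congr 1
      omega
    rw [hyy, ← mul_assoc]
    exact Ideal.mul_mem_left _ _ hymax
  have h1 : (1 : Rc) ∈ IsLocalRing.maximalIdeal Rc := by
    have h1' : (1 : Rc) = -(∑ i ∈ Finset.range n, p.coeff i * y ^ (n - i)) :=
      (neg_eq_of_add_eq_zero_right hS).symm
    rw [h1']
    exact neg_mem hmem
  exact (IsLocalRing.maximalIdeal.isMaximal Rc).ne_top ((Ideal.eq_top_iff_one _).mpr h1)


lemma ElimAux.cofinite_spectrum {A : Type} [CommRing A] [Algebra ℂ A]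
    [Algebra.FiniteType ℂ A] (a : A)
    (hinj : Function.Injective (Polynomial.aeval (R := ℂ) a)) :
    {c : ℂ | Ideal.span {a - algebraMap ℂ A c} = ⊤}.Finite := by
  classical
  letI : Algebra ℂ[X] A := (Polynomial.aeval a).toRingHom.toAlgebra
  have halgA : ∀ q : ℂ[X], algebraMap ℂ[X] A q = Polynomial.aeval a q := fun _ => rfl
  haveI : IsScalarTower ℂ ℂ[X] A := IsScalarTower.of_algebraMap_eq fun z => by
    rw [halgA]; exact ((Polynomial.aeval a).commutes z).symm
  set K := FractionRing ℂ[X] with hK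
  set T := nonZeroDivisors ℂ[X] with hT
  set M : Submonoid A := T.map (algebraMap ℂ[X] A) with hM
  set A' := Localization M with hA'
  set g : ℂ[X] →+* A' := (algebraMap A A').comp (algebraMap ℂ[X] A) with hg
  have hu : ∀ t : T, IsUnit (g t) := by
    intro t
    have : (algebraMap ℂ[X] A) t ∈ M := Submonoid.mem_map_of_mem _ t.2
    exact IsLocalization.map_units A' (⟨_, this⟩ : M)
  haveI : Nontrivial A' := by
    rw [← not_subsingleton_iff_nontrivial]
    intro hsub
    have h1 : (algebraMap A A') 1 = 0 := Subsingleton.elim _ _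
    obtain ⟨t, ht⟩ := (IsLocalization.map_eq_zero_iff M A' 1).mp h1
    rw [mul_one] at ht
    obtain ⟨q, hq, hqt⟩ := t.2
    have hq0 : q = 0 := by
      apply hinj
      rw [map_zero, ← halgA, hqt, ht]
    rw [hq0] at hq
    exact zero_notMem_nonZeroDivisors hq
  set ρK : K →+* A' := IsLocalization.lift (S := K) hu with hρK
  have hρKeq : ∀ q : ℂ[X], ρK (algebraMap ℂ[X] K q) = g q := fun q =>
    IsLocalization.lift_eq hu q
  letI : Algebra K A' := ρK.toAlgebra
  have halgKA' : (algebraMap K A') = ρK := rfl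
  -- A' is finite type over K
  obtain ⟨s, hs⟩ := (inferInstance : Algebra.FiniteType ℂ A).out
  have hKinj : Function.Injective (algebraMap ℂ[X] K) := IsFractionRing.injective _ _
  have hrange : ∀ y : A, algebraMap A A' y ∈ Algebra.adjoin K ((algebraMap A A') '' ↑s) := by
    intro y
    have hy : y ∈ Algebra.adjoin ℂ (↑s : Set A) := hs ▸ Algebra.mem_top
    induction hy using Algebra.adjoin_induction with
    | mem x hx => exact Algebra.subset_adjoin (Set.mem_image_of_mem _ hx)
    | algebraMap z =>
        have : algebraMap ℂ A z = algebraMap ℂ[X] A (C z) := by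
          rw [halgA]; exact ((Polynomial.aeval a).commutes z).symm
        rw [this]
        have : algebraMap A A' (algebraMap ℂ[X] A (C z)) = algebraMap K A' (algebraMap ℂ[X] K (C z)) := by
          rw [halgKA', hρKeq]; rfl
        rw [this]
        exact Subalgebra.algebraMap_mem _ _
    | add x y hx hy ihx ihy => rw [map_add]; exact add_mem ihx ihy
    | mul x y hx hy ihx ihy => rw [map_mul]; exact mul_mem ihx ihy
  have hadj : Algebra.adjoin K ((algebraMap A A') '' ↑s) = ⊤ := by
    rw [eq_top_iff]
    rintro z -
    obtain ⟨⟨x, t⟩, hxt⟩ := IsLocalization.surj M z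
    obtain ⟨q, hq, hqt⟩ := t.2
    have hq0 : (algebraMap ℂ[X] K q) ≠ 0 := fun h => by
      have hq' : q = 0 := hKinj (by rw [h, map_zero])
      exact zero_notMem_nonZeroDivisors (hq' ▸ hq)
    have hginv : g q * algebraMap K A' ((algebraMap ℂ[X] K q)⁻¹) = 1 := by
      rw [halgKA', ← hρKeq, ← map_mul, mul_inv_cancel₀ hq0, map_one]
    have hxt' : z * algebraMap A A' (t : A) = algebraMap A A' x := hxt
    have h2 : algebraMap A A' (t : A) = g q := by rw [hg, RingHom.comp_apply, hqt]
    have hz : z = algebraMap A A' x * algebraMap K A' ((algebraMap ℂ[X] K q)⁻¹) := by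
      calc z = z * (g q * algebraMap K A' ((algebraMap ℂ[X] K q)⁻¹)) := by
                rw [hginv, mul_one]
        _ = (z * algebraMap A A' (t : A)) * algebraMap K A' ((algebraMap ℂ[X] K q)⁻¹) := by
                rw [h2]; ring
        _ = algebraMap A A' x * algebraMap K A' ((algebraMap ℂ[X] K q)⁻¹) := by rw [hxt']
    rw [hz]
    exact mul_mem (hrange x) (Subalgebra.algebraMap_mem _ _)
  haveI : Algebra.FiniteType K A' :=
    ⟨⟨s.image (algebraMap A A'), by rw [Finset.coe_image]; exact hadj⟩⟩
  obtain ⟨M', hM'max⟩ := Ideal.exists_maximal A'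
  haveI := hM'max
  set L := A' ⧸ M' with hL
  letI : Field L := Ideal.Quotient.field M'
  haveI : Algebra.FiniteType K L :=
    Algebra.FiniteType.of_surjective (Ideal.Quotient.mkₐ K M')
      (Ideal.Quotient.mkₐ_surjective K M')
  haveI : Module.Finite K L := finite_of_finite_type_of_isJacobsonRing K L
  haveI : Algebra.IsIntegral K L := Algebra.IsIntegral.of_finite K L
  set ψ : A →+* L := (Ideal.Quotient.mk M').comp (algebraMap A A') with hψ
  have hcomp : ∀ q : ℂ[X], ψ (algebraMap ℂ[X] A q) = algebraMap K L (algebraMap ℂ[X] K q) := by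
    intro q
    have h1 : algebraMap K L (algebraMap ℂ[X] K q) =
        Ideal.Quotient.mk M' (algebraMap K A' (algebraMap ℂ[X] K q)) := rfl
    rw [h1, halgKA', hρKeq]
    rfl
  have hintK : ∀ b : A, IsIntegral K (ψ b) := fun b => Algebra.IsIntegral.isIntegral _
  set D : ℂ[X] := ∏ b ∈ s, ∏ j ∈ Finset.range ((minpoly K (ψ b)).natDegree + 1),
      ((IsLocalization.sec T ((minpoly K (ψ b)).coeff j)).2 : ℂ[X]) with hD
  have hD0 : D ≠ 0 := by
    rw [hD]
    rw [Finset.prod_ne_zero_iff]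
    intro b _
    rw [Finset.prod_ne_zero_iff]
    intro j _
    exact nonZeroDivisors.ne_zero (IsLocalization.sec T ((minpoly K (ψ b)).coeff j)).2.2
  apply (Polynomial.finite_setOf_isRoot hD0).subset
  intro c hc
  simp only [Set.mem_setOf_eq] at hc
  by_contra hcon
  have hroot' : Polynomial.eval c D ≠ 0 := hcon
  apply ElimAux.inner ψ s hs hintK a c ?_ ?_ ?_ hc
  · have hfact : a - algebraMap ℂ A c = algebraMap ℂ[X] A (X - C c) := by
      rw [halgA, map_sub, Polynomial.aeval_X, Polynomial.aeval_C]
    rw [hfact, hcomp]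
  · intro z
    have h1 : algebraMap ℂ A z = algebraMap ℂ[X] A (C z) := by
      rw [halgA]; exact ((Polynomial.aeval a).commutes z).symm
    rw [h1, hcomp]
  · intro b hb j hj
    intro h0
    apply hroot'
    have hdvd1 : ((IsLocalization.sec (nonZeroDivisors ℂ[X])
        ((minpoly K (ψ b)).coeff j)).2 : ℂ[X]) ∣
        ∏ j' ∈ Finset.range ((minpoly K (ψ b)).natDegree + 1),
          ((IsLocalization.sec T ((minpoly K (ψ b)).coeff j')).2 : ℂ[X]) :=
      Finset.dvd_prod_of_mem _ hj
    have hdvd : ((IsLocalization.sec (nonZeroDivisors ℂ[X])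
        ((minpoly K (ψ b)).coeff j)).2 : ℂ[X]) ∣ D := by
      refine hdvd1.trans ?_
      rw [hD]
      exact Finset.dvd_prod_of_mem _ hb
    obtain ⟨e, he⟩ := hdvd
    rw [he, Polynomial.eval_mul, h0, zero_mul]

lemma ElimAux.exists_point {m : ℕ} (I : Ideal (MvPolynomial (Fin m) ℂ)) (hI : I ≠ ⊤) :
    ∃ x : Fin m → ℂ, ∀ p ∈ I, MvPolynomial.eval x p = 0 := by
  by_contra h
  push_neg at h
  have hz : MvPolynomial.zeroLocus ℂ I = ∅ := by
    rw [Set.eq_empty_iff_forall_notMem]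
    intro x hx
    obtain ⟨p, hp, hpx⟩ := h x
    exact hpx (MvPolynomial.mem_zeroLocus_iff.mp hx p hp)
  have hv : MvPolynomial.vanishingIdeal ℂ (MvPolynomial.zeroLocus ℂ I) = ⊤ := by
    rw [hz, eq_top_iff]
    intro p _
    rw [MvPolynomial.mem_vanishingIdeal_iff]
    intro x hx
    exact absurd hx (Set.notMem_empty x)
  rw [MvPolynomial.vanishingIdeal_zeroLocus_eq_radical] at hv
  exact hI (by rwa [Ideal.radical_eq_top] at hv)

lemma ElimAux.spectrum_finite_or_cofinite {A : Type} [CommRing A] [Algebra ℂ A]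
    [Algebra.FiniteType ℂ A] (a : A) :
    {c : ℂ | Ideal.span {a - algebraMap ℂ A c} ≠ ⊤}.Finite ∨
    ({c : ℂ | Ideal.span {a - algebraMap ℂ A c} ≠ ⊤}ᶜ).Finite := by
  by_cases h : ∃ p : ℂ[X], p ≠ 0 ∧ Polynomial.aeval a p = 0
  · obtain ⟨p, hp0, hpa⟩ := h
    exact Or.inl (ElimAux.finite_spectrum a p hp0 hpa)
  · right
    have hinj : Function.Injective (Polynomial.aeval (R := ℂ) a) := by
      rw [injective_iff_map_eq_zero]
      intro p hp
      by_contra hp0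
      exact h ⟨p, hp0, hp⟩
    have hfin := ElimAux.cofinite_spectrum a hinj
    convert hfin using 1
    ext c
    simp

/-- Elimination theory: the polynomial image of a closed algebraic subset of ℂ^m is
either finite or the complement of a finite set. -/
theorem polynomial_image_of_algebraic_set_finite_or_cofinite
    (m : ℕ) (S : Set (MvPolynomial (Fin m) ℂ)) (f : MvPolynomial (Fin m) ℂ) :
    ((fun x : Fin m → ℂ => MvPolynomial.eval x f) ''
        {x : Fin m → ℂ | ∀ p ∈ S, MvPolynomial.eval x p = 0}).Finite ∨
    (((fun x : Fin m → ℂ => MvPolynomial.eval x f) ''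
        {x : Fin m → ℂ | ∀ p ∈ S, MvPolynomial.eval x p = 0})ᶜ).Finite := by
  classical
  haveI : Algebra.FiniteType ℂ (MvPolynomial (Fin m) ℂ ⧸ Ideal.span S) :=
    Algebra.FiniteType.of_surjective
      (Ideal.Quotient.mkₐ ℂ (Ideal.span S)) (Ideal.Quotient.mkₐ_surjective ℂ (Ideal.span S))
  have halgc : ∀ c : ℂ, algebraMap ℂ (MvPolynomial (Fin m) ℂ ⧸ Ideal.span S) c =
      Ideal.Quotient.mk (Ideal.span S) (MvPolynomial.C c) := fun c => rfl
  have himage : (fun x : Fin m → ℂ => MvPolynomial.eval x f) ''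
      {x : Fin m → ℂ | ∀ p ∈ S, MvPolynomial.eval x p = 0}
      = {c : ℂ | Ideal.span {Ideal.Quotient.mk (Ideal.span S) f -
          algebraMap ℂ (MvPolynomial (Fin m) ℂ ⧸ Ideal.span S) c} ≠ ⊤} := by
    ext c
    constructor
    · rintro ⟨x, hx, rfl⟩
      have hker : ∀ r ∈ Ideal.span S, MvPolynomial.eval x r = 0 := by
        intro r hr
        have hle : Ideal.span S ≤ RingHom.ker (MvPolynomial.eval x) := by
          rw [Ideal.span_le]
          intro p hp
          rw [SetLike.mem_coe, RingHom.mem_ker]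
          exact hx p hp
        exact hle hr
      intro htop
      obtain ⟨r, hr⟩ := Ideal.mem_span_singleton'.mp (htop ▸ Submodule.mem_top :
        (1 : MvPolynomial (Fin m) ℂ ⧸ Ideal.span S) ∈ Ideal.span
          {Ideal.Quotient.mk (Ideal.span S) f - algebraMap ℂ
            (MvPolynomial (Fin m) ℂ ⧸ Ideal.span S) (MvPolynomial.eval x f)})
      have hcongr := congrArg (Ideal.Quotient.lift (Ideal.span S) (MvPolynomial.eval x) hker) hr
      have hzero : Ideal.Quotient.lift (Ideal.span S) (MvPolynomial.eval x) hker
          (Ideal.Quotient.mk (Ideal.span S) f - algebraMap ℂ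
            (MvPolynomial (Fin m) ℂ ⧸ Ideal.span S) (MvPolynomial.eval x f)) = 0 := by
        rw [RingHom.map_sub, halgc, Ideal.Quotient.lift_mk, Ideal.Quotient.lift_mk,
          MvPolynomial.eval_C, sub_self]
      rw [map_one, map_mul, hzero, mul_zero] at hcongr
      exact one_ne_zero hcongr.symm
    · intro hne
      have hIc : Ideal.span (S ∪ {f - MvPolynomial.C c}) ≠ ⊤ := by
        intro htop
        apply hne
        have hmap : Ideal.map (Ideal.Quotient.mk (Ideal.span S))
            (Ideal.span (S ∪ {f - MvPolynomial.C c})) ≤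
            Ideal.span {Ideal.Quotient.mk (Ideal.span S) f -
              algebraMap ℂ (MvPolynomial (Fin m) ℂ ⧸ Ideal.span S) c} := by
          rw [Ideal.map_span, Ideal.span_le]
          rintro y ⟨p, hp | hp, rfl⟩
          · have h0 : Ideal.Quotient.mk (Ideal.span S) p = 0 :=
              Ideal.Quotient.eq_zero_iff_mem.mpr (Ideal.subset_span hp)
            rw [h0]
            exact Submodule.zero_mem _
          · rw [Set.mem_singleton_iff] at hp; subst hp
            have h1 : Ideal.Quotient.mk (Ideal.span S) (f - MvPolynomial.C c) =
                Ideal.Quotient.mk (Ideal.span S) f -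
                  algebraMap ℂ (MvPolynomial (Fin m) ℂ ⧸ Ideal.span S) c := by
              rw [map_sub, halgc]
            rw [h1]
            exact Ideal.subset_span (Set.mem_singleton _)
        rw [eq_top_iff]
        calc (⊤ : Ideal (MvPolynomial (Fin m) ℂ ⧸ Ideal.span S))
            = Ideal.map (Ideal.Quotient.mk (Ideal.span S)) ⊤ :=
              (Ideal.map_top (Ideal.Quotient.mk (Ideal.span S))).symm
          _ = Ideal.map (Ideal.Quotient.mk (Ideal.span S))
                (Ideal.span (S ∪ {f - MvPolynomial.C c})) := by rw [htop]
          _ ≤ _ := hmap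
      obtain ⟨x, hx⟩ := ElimAux.exists_point _ hIc
      refine ⟨x, fun p hp => hx p (Ideal.subset_span (Or.inl hp)), ?_⟩
      have h0 := hx (f - MvPolynomial.C c) (Ideal.subset_span (Or.inr rfl))
      rw [map_sub, MvPolynomial.eval_C] at h0
      exact sub_eq_zero.mp h0
  rw [himage]
  exact ElimAux.spectrum_finite_or_cofinite (Ideal.Quotient.mk (Ideal.span S) f)
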